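/- For every real ν > 2 and all real p > 0, q > 0, r > 0, ∫_0^∞ ∫_0^∞ ∫_0^∞ (xyz)^{(ν−2)/2} / (xy + xz + yz)^{(ν+1)/2} · e^{−px − qy − rz} dx dy dz = (8π·Γ(ν/2 + 1) / (ν(ν−1)(ν−2))) · (√p + √q + √r)^{2−ν}. -/

import Mathlib

open MeasureTheory Set Real

namespace TripleLaplaceAux


lemma L0 {a c : ℝ} (ha : -1 < a) (hc : 0 < c) :
    IntegrableOn (fun x : ℝ => x ^ a * Real.exp (-(c * x))) (Ioi 0) := by
  have h := Real.GammaIntegral_convergent (show (0:ℝ) < a + 1 by linarith)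
  have h2 : IntegrableOn (fun x : ℝ => Real.exp (-(c*x)) * (c*x) ^ (a + 1 - 1)) (Ioi 0) := by
    have := (integrableOn_Ioi_comp_mul_left_iff
      (fun x : ℝ => Real.exp (-x) * x ^ (a+1-1)) 0 hc).2 (by simpa using h)
    simpa using this
  have h3 : IntegrableOn (fun x : ℝ => c ^ (-a) * (Real.exp (-(c*x)) * (c*x) ^ (a + 1 - 1))) (Ioi 0) :=
    h2.const_mul (c ^ (-a))
  apply IntegrableOn.congr_fun h3 ?_ measurableSet_Ioi
  intro x hx
  simp only [add_sub_cancel_right]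
  rw [Real.mul_rpow hc.le (le_of_lt hx)]
  have hcc : c ^ (-a) * c ^ a = 1 := by rw [← Real.rpow_add hc]; simp
  linear_combination (Real.exp (-(c*x)) * x ^ a) * hcc

lemma hasDerivAt_f (a b x : ℝ) (hx : x ≠ 0) :
    HasDerivAt (fun t : ℝ => a * t - b / t) (a + b / x ^ 2) x := by
  have h : HasDerivAt (fun t : ℝ => a * t - b * t⁻¹) (a * 1 - b * (-(↑x ^ 2)⁻¹)) x :=
    ((hasDerivAt_id x).const_mul a).sub ((hasDerivAt_inv hx).const_mul b)
  have h2 : a * 1 - b * (-(x ^ 2)⁻¹) = a + b / x ^ 2 := by field_simp; ring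
  rw [h2] at h
  convert h using 2 with t
  ring


lemma image_f {a b : ℝ} (ha : 0 < a) (hb : 0 < b) :
    (fun x : ℝ => a * x - b / x) '' (Ioi 0) = univ := by
  refine eq_univ_of_forall fun t => ?_
  have h4 : (0:ℝ) < t ^ 2 + 4 * (a * b) := by positivity
  set D := Real.sqrt (t ^ 2 + 4 * (a * b)) with hD
  have hD2 : D ^ 2 = t ^ 2 + 4 * (a * b) := Real.sq_sqrt h4.le
  have habs : |t| < D := by
    rw [← Real.sqrt_sq_eq_abs]
    exact Real.sqrt_lt_sqrt (sq_nonneg t) (by nlinarith)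
  have hx : 0 < (t + D) / (2 * a) := by
    have := neg_abs_le t
    apply div_pos (by linarith) (by linarith)
  refine ⟨(t + D) / (2 * a), mem_Ioi.2 hx, ?_⟩
  have hne : t + D ≠ 0 := by
    have := neg_abs_le t; intro h; nlinarith
  field_simp
  nlinarith [hD2]

lemma strictMono_f {a b : ℝ} (ha : 0 < a) (hb : 0 < b) :
    StrictMonoOn (fun x : ℝ => a * x - b / x) (Ioi 0) := by
  intro x hx y hy hxy
  simp only
  have h1 : b / y < b / x := div_lt_div_of_pos_left hb hx hxy
  have h2 : a * x < a * y := by nlinarith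
  linarith

lemma gaussK {a b : ℝ} (ha : 0 < a) (hb : 0 < b) :
    ∫ x in Ioi (0:ℝ), (a + b / x ^ 2) * Real.exp (-(a * x - b / x) ^ 2) = Real.sqrt π := by
  have hderiv : ∀ x ∈ Ioi (0:ℝ), HasDerivWithinAt (fun t : ℝ => a * t - b / t)
      (a + b / x ^ 2) (Ioi 0) x :=
    fun x hx => (hasDerivAt_f a b x (ne_of_gt hx)).hasDerivWithinAt
  have h := integral_image_eq_integral_abs_deriv_smul measurableSet_Ioi hderiv
    ((strictMono_f ha hb).injOn) (fun t => Real.exp (-t ^ 2))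
  rw [image_f ha hb, Measure.restrict_univ] at h
  have hg : ∫ t : ℝ, Real.exp (-t ^ 2) = Real.sqrt π := by
    simpa using integral_gaussian 1
  rw [← hg, h]
  apply setIntegral_congr_fun measurableSet_Ioi
  intro x hx
  have h1 : (0:ℝ) < a + b / x ^ 2 := by
    have : (0:ℝ) < x := hx
    positivity
  simp only [smul_eq_mul, abs_of_pos h1]

lemma int_gaussK {a b : ℝ} (ha : 0 < a) (hb : 0 < b) :
    IntegrableOn (fun x : ℝ => (a + b / x ^ 2) * Real.exp (-(a * x - b / x) ^ 2)) (Ioi 0) := by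
  have hderiv : ∀ x ∈ Ioi (0:ℝ), HasDerivWithinAt (fun t : ℝ => a * t - b / t)
      (a + b / x ^ 2) (Ioi 0) x :=
    fun x hx => (hasDerivAt_f a b x (ne_of_gt hx)).hasDerivWithinAt
  have h := (integrableOn_image_iff_integrableOn_abs_deriv_smul measurableSet_Ioi hderiv
    ((strictMono_f ha hb).injOn) (fun t => Real.exp (-t ^ 2))).1
  rw [image_f ha hb] at h
  have hint : IntegrableOn (fun t : ℝ => Real.exp (-t ^ 2)) univ := by
    rw [integrableOn_univ]
    simpa using integrable_exp_neg_mul_sq (one_pos : (0:ℝ) < 1)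
  apply (h hint).congr_fun ?_ measurableSet_Ioi
  intro x hx
  have h1 : (0:ℝ) < a + b / x ^ 2 := by
    have : (0:ℝ) < x := hx
    positivity
  simp only [smul_eq_mul, abs_of_pos h1]



variable {a b : ℝ}

-- involution x ↦ (b/a)/x on Ioi 0
lemma glasser_inv (ha : 0 < a) (hb : 0 < b) :
    ∫ x in Ioi (0:ℝ), Real.exp (-(a * x - b / x) ^ 2)
      = ∫ x in Ioi (0:ℝ), (b / (a * x ^ 2)) * Real.exp (-(a * x - b / x) ^ 2) := by
  set c := b / a with hc
  have hcpos : 0 < c := div_pos hb ha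
  have hderiv : ∀ x ∈ Ioi (0:ℝ), HasDerivWithinAt (fun t : ℝ => c * t⁻¹)
      (-(c / x ^ 2)) (Ioi 0) x := by
    intro x hx
    have h : HasDerivAt (fun t : ℝ => c * t⁻¹) (c * (-(x ^ 2)⁻¹)) x :=
      (hasDerivAt_inv (ne_of_gt hx)).const_mul c
    have h2 : c * (-(x ^ 2)⁻¹) = -(c / x ^ 2) := by field_simp
    rw [h2] at h
    exact h.hasDerivWithinAt
  have himg : (fun t : ℝ => c * t⁻¹) '' (Ioi 0) = Ioi 0 := by
    ext t
    constructor
    · rintro ⟨u, hu, rfl⟩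
      have : (0:ℝ) < u := hu
      exact mem_Ioi.2 (by positivity)
    · intro ht
      have ht' : (0:ℝ) < t := ht
      exact ⟨c / t, mem_Ioi.2 (by positivity), by field_simp⟩
  have hinj : InjOn (fun t : ℝ => c * t⁻¹) (Ioi 0) := by
    intro u hu v hv h
    have hu' : (0:ℝ) < u := hu
    have hv' : (0:ℝ) < v := hv
    simp only at h
    exact inv_injective (mul_left_cancel₀ hcpos.ne' h)

  have h := integral_image_eq_integral_abs_deriv_smul measurableSet_Ioi hderiv hinj
    (fun t => Real.exp (-(a * t - b / t) ^ 2))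
  rw [himg] at h
  rw [h]
  apply setIntegral_congr_fun measurableSet_Ioi
  intro x hx
  have hx' : (0:ℝ) < x := hx
  have h1 : |(-(c / x ^ 2))| = c / x ^ 2 := by
    rw [abs_neg, abs_of_pos (by positivity)]
  simp only [smul_eq_mul, h1]
  have harg : a * (c * x⁻¹) - b / (c * x⁻¹) = -(a * x - b / x) := by
    rw [hc]; field_simp; ring
  rw [harg, neg_sq]
  rw [hc]
  congr 1
  field_simp



-- copied deps (will merge later)
variable {a b : ℝ}

lemma meas_e : Measurable (fun x : ℝ => Real.exp (-(a * x - b / x) ^ 2)) := by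
  fun_prop

lemma int_e (ha : 0 < a) (hb : 0 < b) :
    IntegrableOn (fun x : ℝ => Real.exp (-(a * x - b / x) ^ 2)) (Ioi 0) := by
  apply Integrable.mono' ((int_gaussK ha hb).const_mul (1/a)) meas_e.aestronglyMeasurable
  rw [ae_restrict_iff' measurableSet_Ioi]
  filter_upwards with x hx
  have hx' : (0:ℝ) < x := hx
  rw [Real.norm_eq_abs, abs_of_pos (Real.exp_pos _)]
  have h1 : a ≤ a + b / x ^ 2 := by
    have : 0 < b / x ^ 2 := by positivity
    linarith
  have h2 := (Real.exp_pos (-(a * x - b / x) ^ 2)).le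
  calc Real.exp (-(a * x - b / x) ^ 2)
      = (1/a) * (a * Real.exp (-(a * x - b / x) ^ 2)) := by field_simp
    _ ≤ 1/a * ((a + b / x ^ 2) * Real.exp (-(a * x - b / x) ^ 2)) := by
        apply mul_le_mul_of_nonneg_left (by nlinarith) (by positivity)

lemma int_w (ha : 0 < a) (hb : 0 < b) :
    IntegrableOn (fun x : ℝ => b / x ^ 2 * Real.exp (-(a * x - b / x) ^ 2)) (Ioi 0) := by
  have hm : Measurable (fun x : ℝ => b / x ^ 2 * Real.exp (-(a * x - b / x) ^ 2)) := by fun_prop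
  apply Integrable.mono' (int_gaussK ha hb)
  · exact hm.aestronglyMeasurable
  rw [ae_restrict_iff' measurableSet_Ioi]
  filter_upwards with x hx
  have hx' : (0:ℝ) < x := hx
  have h2 := (Real.exp_pos (-(a * x - b / x) ^ 2)).le
  rw [Real.norm_eq_abs, abs_of_nonneg (by positivity)]
  have h1 : b / x ^ 2 ≤ a + b / x ^ 2 := by linarith
  nlinarith

lemma glasser_J (ha : 0 < a) (hb : 0 < b) :
    ∫ x in Ioi (0:ℝ), Real.exp (-(a * x - b / x) ^ 2) = Real.sqrt π / (2 * a) := by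
  have hsplit : ∀ x : ℝ, (a + b / x ^ 2) * Real.exp (-(a * x - b / x) ^ 2)
      = a * Real.exp (-(a * x - b / x) ^ 2) + b / x ^ 2 * Real.exp (-(a * x - b / x) ^ 2) :=
    fun x => by ring
  have hK : ∫ x in Ioi (0:ℝ), (a + b / x ^ 2) * Real.exp (-(a * x - b / x) ^ 2)
      = a * (∫ x in Ioi (0:ℝ), Real.exp (-(a * x - b / x) ^ 2))
        + ∫ x in Ioi (0:ℝ), b / x ^ 2 * Real.exp (-(a * x - b / x) ^ 2) := by
    rw [← integral_const_mul]
    rw [← integral_add (((int_e ha hb).const_mul a)) (int_w ha hb)]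
    simp_rw [hsplit]
  have hW : ∫ x in Ioi (0:ℝ), b / x ^ 2 * Real.exp (-(a * x - b / x) ^ 2)
      = a * ∫ x in Ioi (0:ℝ), Real.exp (-(a * x - b / x) ^ 2) := by
    rw [glasser_inv ha hb, ← integral_const_mul]
    apply setIntegral_congr_fun measurableSet_Ioi
    intro x hx
    have hx' : (0:ℝ) < x := hx
    field_simp
  rw [gaussK ha hb, hW] at hK
  have ha' : a ≠ 0 := ne_of_gt ha
  field_simp at hK ⊢
  linarith

lemma glasser_invsq (ha : 0 < a) (hb : 0 < b) :
    ∫ x in Ioi (0:ℝ), 1 / x ^ 2 * Real.exp (-(a * x - b / x) ^ 2)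
      = Real.sqrt π / (2 * b) := by
  have hW : ∫ x in Ioi (0:ℝ), b / x ^ 2 * Real.exp (-(a * x - b / x) ^ 2)
      = a * ∫ x in Ioi (0:ℝ), Real.exp (-(a * x - b / x) ^ 2) := by
    rw [glasser_inv ha hb, ← integral_const_mul]
    apply setIntegral_congr_fun measurableSet_Ioi
    intro x hx
    have hx' : (0:ℝ) < x := hx
    field_simp
  have h1 : ∫ x in Ioi (0:ℝ), 1 / x ^ 2 * Real.exp (-(a * x - b / x) ^ 2)
      = (1/b) * ∫ x in Ioi (0:ℝ), b / x ^ 2 * Real.exp (-(a * x - b / x) ^ 2) := by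
    rw [← integral_const_mul]
    apply setIntegral_congr_fun measurableSet_Ioi
    intro x hx
    have hx' : (0:ℝ) < x := hx
    field_simp
  rw [h1, hW, glasser_J ha hb]
  field_simp

lemma int_invsq (ha : 0 < a) (hb : 0 < b) :
    IntegrableOn (fun x : ℝ => 1 / x ^ 2 * Real.exp (-(a * x - b / x) ^ 2)) (Ioi 0) := by
  have h := (int_w ha hb).const_mul (1/b)
  apply IntegrableOn.congr_fun h ?_ measurableSet_Ioi
  intro x hx
  simp only
  field_simp



lemma sq_deriv : ∀ u ∈ Ioi (0:ℝ), HasDerivWithinAt (fun u : ℝ => u ^ 2) (2 * u) (Ioi 0) u := by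
  intro u hu
  simpa using (hasDerivAt_pow 2 u).hasDerivWithinAt

lemma sq_image : (fun u : ℝ => u ^ 2) '' (Ioi 0) = Ioi 0 := by
  ext t
  constructor
  · rintro ⟨u, hu, rfl⟩
    have : (0:ℝ) < u := hu
    exact mem_Ioi.2 (by positivity)
  · intro ht
    have ht' : (0:ℝ) < t := ht
    exact ⟨Real.sqrt t, mem_Ioi.2 (Real.sqrt_pos.2 ht'), Real.sq_sqrt ht'.le⟩

lemma sq_inj : InjOn (fun u : ℝ => u ^ 2) (Ioi 0) := by
  intro u hu v hv h
  have hu' : (0:ℝ) < u := hu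
  have hv' : (0:ℝ) < v := hv
  simp only at h
  nlinarith

-- pointwise rewriting of transported integrand
lemma transport_eq {c d : ℝ} (hc : 0 < c) (hd : 0 < d) {u : ℝ} (hu : (0:ℝ) < u) :
    |2 * u| • ((u ^ 2) ^ (-(3:ℝ)/2) * Real.exp (-(d / u ^ 2) - c * u ^ 2))
      = (2 * Real.exp (-(2 * Real.sqrt c * Real.sqrt d)))
          * (1 / u ^ 2 * Real.exp (-(Real.sqrt c * u - Real.sqrt d / u) ^ 2)) := by
  have ha2 : Real.sqrt c ^ 2 = c := Real.sq_sqrt hc.le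
  have hb2 : Real.sqrt d ^ 2 = d := Real.sq_sqrt hd.le
  have hrpow : (u ^ 2 : ℝ) ^ (-(3:ℝ)/2) = (u ^ 3)⁻¹ := by
    rw [← Real.rpow_natCast u 2, ← Real.rpow_mul hu.le]
    norm_num
  have hexp : -(d / u ^ 2) - c * u ^ 2
      = -(Real.sqrt c * u - Real.sqrt d / u) ^ 2 + -(2 * Real.sqrt c * Real.sqrt d) := by
    have hu0 : u ≠ 0 := ne_of_gt hu
    field_simp
    linear_combination (1 : ℝ) * hb2 + (u^4 : ℝ) * ha2
  rw [hexp, Real.exp_add, hrpow, smul_eq_mul, abs_of_pos (by positivity)]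
  have hu0 : u ≠ 0 := ne_of_gt hu
  field_simp

lemma keyB {c d : ℝ} (hc : 0 < c) (hd : 0 < d) :
    ∫ x in Ioi (0:ℝ), x ^ (-(3:ℝ)/2) * Real.exp (-(d / x) - c * x)
      = Real.sqrt π / Real.sqrt d * Real.exp (-(2 * Real.sqrt c * Real.sqrt d)) := by
  have h := integral_image_eq_integral_abs_deriv_smul measurableSet_Ioi sq_deriv sq_inj
    (fun x : ℝ => x ^ (-(3:ℝ)/2) * Real.exp (-(d / x) - c * x))
  rw [sq_image] at h
  rw [h]
  have h2 : ∫ u in Ioi (0:ℝ),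
      |2 * u| • ((u ^ 2) ^ (-(3:ℝ)/2) * Real.exp (-(d / u ^ 2) - c * u ^ 2))
      = ∫ u in Ioi (0:ℝ), (2 * Real.exp (-(2 * Real.sqrt c * Real.sqrt d)))
          * (1 / u ^ 2 * Real.exp (-(Real.sqrt c * u - Real.sqrt d / u) ^ 2)) := by
    apply setIntegral_congr_fun measurableSet_Ioi
    intro u hu
    exact transport_eq hc hd hu
  rw [h2, integral_const_mul, glasser_invsq (Real.sqrt_pos.2 hc) (Real.sqrt_pos.2 hd)]
  have h3 : Real.sqrt d ≠ 0 := ne_of_gt (Real.sqrt_pos.2 hd)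
  field_simp

lemma keyB_int {c d : ℝ} (hc : 0 < c) (hd : 0 < d) :
    IntegrableOn (fun x : ℝ => x ^ (-(3:ℝ)/2) * Real.exp (-(d / x) - c * x)) (Ioi 0) := by
  have h := (integrableOn_image_iff_integrableOn_abs_deriv_smul measurableSet_Ioi sq_deriv sq_inj
    (fun x : ℝ => x ^ (-(3:ℝ)/2) * Real.exp (-(d / x) - c * x)))
  rw [sq_image] at h
  rw [h]
  have h2 := ((int_invsq (Real.sqrt_pos.2 hc) (Real.sqrt_pos.2 hd)).const_mul
    (2 * Real.exp (-(2 * Real.sqrt c * Real.sqrt d))))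
  apply IntegrableOn.congr_fun h2 ?_ measurableSet_Ioi
  intro u hu
  exact (transport_eq hc hd hu).symm



lemma sqrt_sq_div4 {s : ℝ} (hs : 0 < s) : Real.sqrt (s ^ 2 / 4) = s / 2 := by
  rw [show s ^ 2 / 4 = (s / 2) ^ 2 by ring, Real.sqrt_sq (by linarith)]

lemma keyB' {c s : ℝ} (hc : 0 < c) (hs : 0 < s) :
    ∫ x in Ioi (0:ℝ), x ^ (-(3:ℝ)/2) * Real.exp (-(s ^ 2 / (4 * x)) - c * x)
      = 2 * Real.sqrt π / s * Real.exp (-(s * Real.sqrt c)) := by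
  have hd : (0:ℝ) < s ^ 2 / 4 := by positivity
  have h := keyB hc hd
  rw [sqrt_sq_div4 hs] at h
  have h2 : ∫ x in Ioi (0:ℝ), x ^ (-(3:ℝ)/2) * Real.exp (-(s ^ 2 / (4 * x)) - c * x)
      = ∫ x in Ioi (0:ℝ), x ^ (-(3:ℝ)/2) * Real.exp (-(s ^ 2 / 4 / x) - c * x) := by
    apply setIntegral_congr_fun measurableSet_Ioi
    intro x hx
    ring_nf
  rw [h2, h]
  rw [show 2 * Real.sqrt c * (s / 2) = s * Real.sqrt c by ring]
  congr 1
  field_simp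

lemma keyB'_int {c s : ℝ} (hc : 0 < c) (hs : 0 < s) :
    IntegrableOn (fun x : ℝ => x ^ (-(3:ℝ)/2) * Real.exp (-(s ^ 2 / (4 * x)) - c * x))
      (Ioi 0) := by
  have hd : (0:ℝ) < s ^ 2 / 4 := by positivity
  apply IntegrableOn.congr_fun (keyB_int hc hd) ?_ measurableSet_Ioi
  intro x hx
  simp only
  congr 2
  ring

/-- Tonelli-type swap for nonnegative integrands with evaluated inner integral. -/
lemma swap_eval {φ : ℝ → ℝ → ℝ} {g : ℝ → ℝ}
    (hmeas : Measurable (Function.uncurry φ))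
    (hnn : ∀ x ∈ Ioi (0:ℝ), ∀ s ∈ Ioi (0:ℝ), 0 ≤ φ x s)
    (hxi : ∀ s ∈ Ioi (0:ℝ), IntegrableOn (fun x => φ x s) (Ioi 0))
    (hval : ∀ s ∈ Ioi (0:ℝ), ∫ x in Ioi (0:ℝ), φ x s = g s)
    (hg : IntegrableOn g (Ioi 0)) :
    ∫ x in Ioi (0:ℝ), ∫ s in Ioi (0:ℝ), φ x s = ∫ s in Ioi (0:ℝ), g s := by
  have hsm : AEStronglyMeasurable (Function.uncurry φ)
      ((volume.restrict (Ioi 0)).prod (volume.restrict (Ioi 0))) :=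
    hmeas.aestronglyMeasurable
  have hprod : Integrable (Function.uncurry φ)
      ((volume.restrict (Ioi 0)).prod (volume.restrict (Ioi 0))) := by
    rw [integrable_prod_iff' hsm]
    constructor
    · rw [ae_restrict_iff' measurableSet_Ioi]
      filter_upwards with s hs
      exact hxi s hs
    · apply Integrable.congr hg
      apply Filter.eventuallyEq_of_mem (self_mem_ae_restrict measurableSet_Ioi)
      intro s hs
      rw [← hval s hs]
      apply setIntegral_congr_fun measurableSet_Ioi
      intro x hx
      simp only [Function.uncurry_apply_pair, Real.norm_eq_abs,
        abs_of_nonneg (hnn x hx s hs)]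
  have hswap := integral_integral_swap hprod
  rw [hswap]
  apply setIntegral_congr_fun measurableSet_Ioi
  intro s hs
  exact hval s hs



lemma stepA {ν : ℝ} (hν : 2 < ν) {x y z : ℝ} (hx : 0 < x) (hy : 0 < y) (hz : 0 < z) :
    (x * y * z) ^ ((ν - 2) / 2) / (x * y + x * z + y * z) ^ ((ν + 1) / 2)
      = (2:ℝ) ^ (-ν) / Real.Gamma ((ν + 1) / 2) * ((x * y * z) ^ (-(3:ℝ)/2)
          * ∫ s in Ioi (0:ℝ), s ^ ν *
              Real.exp (-(s ^ 2 / (4 * x)) - s ^ 2 / (4 * y) - s ^ 2 / (4 * z))) := by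
  have hk : 0 < (ν + 1) / 2 := by linarith
  have hS : (0:ℝ) < 1/x + 1/y + 1/z := by positivity
  have hb : (0:ℝ) < (1/x + 1/y + 1/z)/4 := by positivity
  have hΓ : 0 < Real.Gamma ((ν + 1) / 2) := Real.Gamma_pos_of_pos hk
  have hxyz : (0:ℝ) < x * y * z := by positivity
  have hcongr : (∫ s in Ioi (0:ℝ), s ^ ν *
        Real.exp (-(s ^ 2 / (4 * x)) - s ^ 2 / (4 * y) - s ^ 2 / (4 * z)))
      = ∫ s in Ioi (0:ℝ), s ^ ν * Real.exp (-((1/x + 1/y + 1/z)/4) * s ^ (2:ℝ)) := by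
    apply setIntegral_congr_fun measurableSet_Ioi
    intro s hs
    have h2 : (s:ℝ) ^ (2:ℝ) = s ^ 2 := by
      rw [← Real.rpow_natCast s 2]; norm_num
    dsimp only
    rw [h2]
    congr 1
    field_simp
    ring
  have hint := integral_rpow_mul_exp_neg_mul_rpow (two_pos) (by linarith : (-1:ℝ) < ν) hb
  rw [hcongr, hint]
  -- now pure rpow algebra
  have hB : x * y + x * z + y * z = (x * y * z) * (1/x + 1/y + 1/z) := by
    field_simp
    ring
  rw [hB, Real.mul_rpow hxyz.le hS.le]
  have h44 : (4:ℝ) ^ (-(ν + 1) / 2) = (2:ℝ) ^ (-(ν+1)) := by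
    rw [show (4:ℝ) = 2 * 2 by norm_num, Real.mul_rpow (by norm_num) (by norm_num),
      ← Real.rpow_add two_pos]
    congr 1
    ring
  have h4 : ((1/x + 1/y + 1/z)/4) ^ (-(ν + 1) / 2)
      = (1/x + 1/y + 1/z) ^ (-(ν + 1) / 2) * (2:ℝ) ^ (ν + 1) := by
    rw [Real.div_rpow hS.le (by norm_num), h44, Real.rpow_neg (by norm_num : (0:ℝ) ≤ 2)]
    rw [div_inv_eq_mul]
  rw [h4]
  have hsplit : (x * y * z) ^ ((ν - 2) / 2) / ((x * y * z) ^ ((ν + 1) / 2)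
      * (1/x + 1/y + 1/z) ^ ((ν + 1) / 2))
      = (x * y * z) ^ (-(3:ℝ)/2) * (1/x + 1/y + 1/z) ^ (-(ν + 1) / 2) := by
    rw [div_eq_mul_inv, mul_inv, ← Real.rpow_neg hxyz.le, ← Real.rpow_neg hS.le,
      ← mul_assoc, ← Real.rpow_add hxyz]
    rw [show (-(ν + 1) / 2 : ℝ) = -((ν + 1) / 2) by ring]
    congr 2
    ring
  rw [hsplit]
  have h2ν : (2:ℝ) ^ (-ν) * (2:ℝ) ^ (ν + 1) = 2 := by
    rw [← Real.rpow_add two_pos]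
    norm_num
  have hne : Real.Gamma ((ν + 1) / 2) ≠ 0 := ne_of_gt hΓ
  rw [div_mul_eq_mul_div, eq_div_iff hne]
  linear_combination (-((x * y * z) ^ (-(3:ℝ)/2) * (1/x + 1/y + 1/z) ^ (-(ν + 1) / 2)
    * Real.Gamma ((ν + 1) / 2)) / 2) * h2ν

noncomputable def ψ1 (ν p q r y z s : ℝ) : ℝ :=
  s ^ (ν - 1) * (2 * Real.sqrt π) * Real.exp (-(s * Real.sqrt p)) *
    ((y * z) ^ (-(3:ℝ)/2) * Real.exp (-(s ^ 2 / (4 * y)) - s ^ 2 / (4 * z)) *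
      Real.exp (-(q * y) - r * z))

noncomputable def ψ2 (ν p q r z s : ℝ) : ℝ :=
  s ^ (ν - 2) * (2 * Real.sqrt π) ^ 2 * Real.exp (-(s * (Real.sqrt p + Real.sqrt q))) *
    (z ^ (-(3:ℝ)/2) * Real.exp (-(s ^ 2 / (4 * z))) * Real.exp (-(r * z)))

noncomputable def ψ3 (ν p q r s : ℝ) : ℝ :=
  s ^ (ν - 3) * (2 * Real.sqrt π) ^ 3 *
    Real.exp (-(s * (Real.sqrt p + Real.sqrt q + Real.sqrt r)))

lemma psi1_nonneg {ν p q r y z : ℝ} (hy : 0 < y) (hz : 0 < z) {s : ℝ} (hs : 0 < s) :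
    0 ≤ ψ1 ν p q r y z s := by
  unfold ψ1
  have h1 : (0:ℝ) ≤ s ^ (ν - 1) := Real.rpow_nonneg hs.le _
  have h2 : (0:ℝ) ≤ (y * z) ^ (-(3:ℝ)/2) := Real.rpow_nonneg (by positivity) _
  positivity

lemma psi2_nonneg {ν p q r z : ℝ} (hz : 0 < z) {s : ℝ} (hs : 0 < s) :
    0 ≤ ψ2 ν p q r z s := by
  unfold ψ2
  have h1 : (0:ℝ) ≤ s ^ (ν - 2) := Real.rpow_nonneg hs.le _
  have h2 : (0:ℝ) ≤ z ^ (-(3:ℝ)/2) := Real.rpow_nonneg hz.le _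
  positivity

lemma int_psi1 {ν p q r y z : ℝ} (hν : 2 < ν) (hp : 0 < p) (hy : 0 < y) (hz : 0 < z) :
    IntegrableOn (fun s => ψ1 ν p q r y z s) (Ioi 0) := by
  have hb : (0:ℝ) < 1 / (4 * y) := by positivity
  have hmaj := (integrableOn_rpow_mul_exp_neg_mul_sq hb
      (by linarith : (-1:ℝ) < ν - 1)).const_mul
      (2 * Real.sqrt π * ((y * z) ^ (-(3:ℝ)/2) * Real.exp (-(q * y) - r * z)))
  apply Integrable.mono' hmaj
  · have : Measurable (fun s => ψ1 ν p q r y z s) := by unfold ψ1; fun_prop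
    exact this.aestronglyMeasurable
  rw [ae_restrict_iff' measurableSet_Ioi]
  filter_upwards with s hs
  have hs' : (0:ℝ) < s := hs
  have hW : (0:ℝ) ≤ (y * z) ^ (-(3:ℝ)/2) := Real.rpow_nonneg (by positivity) _
  have hP : (0:ℝ) ≤ s ^ (ν - 1) := Real.rpow_nonneg hs'.le _
  have hE1 : Real.exp (-(s * Real.sqrt p)) ≤ 1 := by
    rw [Real.exp_le_one_iff]
    have : (0:ℝ) ≤ s * Real.sqrt p := by positivity
    linarith
  have hE2 : Real.exp (-(s ^ 2 / (4 * y)) - s ^ 2 / (4 * z))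
      ≤ Real.exp (-(1 / (4 * y)) * s ^ 2) := by
    rw [Real.exp_le_exp]
    have h1 : (0:ℝ) ≤ s ^ 2 / (4 * z) := by positivity
    have h2 : -(1 / (4 * y)) * s ^ 2 = -(s ^ 2 / (4 * y)) := by ring
    linarith
  have key : ψ1 ν p q r y z s
      = (2 * Real.sqrt π * ((y * z) ^ (-(3:ℝ)/2) * Real.exp (-(q * y) - r * z)) * s ^ (ν - 1))
        * (Real.exp (-(s * Real.sqrt p)) * Real.exp (-(s ^ 2 / (4 * y)) - s ^ 2 / (4 * z))) := by
    unfold ψ1; ring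
  have hcoef : (0:ℝ) ≤ 2 * Real.sqrt π * ((y * z) ^ (-(3:ℝ)/2) * Real.exp (-(q * y) - r * z))
      * s ^ (ν - 1) := by positivity
  have hnn : 0 ≤ ψ1 ν p q r y z s := psi1_nonneg hy hz hs'
  rw [Real.norm_eq_abs, abs_of_nonneg hnn, key]
  calc (2 * Real.sqrt π * ((y * z) ^ (-(3:ℝ)/2) * Real.exp (-(q * y) - r * z)) * s ^ (ν - 1))
        * (Real.exp (-(s * Real.sqrt p)) * Real.exp (-(s ^ 2 / (4 * y)) - s ^ 2 / (4 * z)))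
      ≤ (2 * Real.sqrt π * ((y * z) ^ (-(3:ℝ)/2) * Real.exp (-(q * y) - r * z)) * s ^ (ν - 1))
        * (1 * Real.exp (-(1 / (4 * y)) * s ^ 2)) := by
        apply mul_le_mul_of_nonneg_left ?_ hcoef
        exact mul_le_mul hE1 hE2 (Real.exp_pos _).le zero_le_one
    _ = 2 * Real.sqrt π * ((y * z) ^ (-(3:ℝ)/2) * Real.exp (-(q * y) - r * z))
        * (s ^ (ν - 1) * Real.exp (-(1 / (4 * y)) * s ^ 2)) := by ring

lemma int_psi2 {ν p q r z : ℝ} (hν : 2 < ν) (hp : 0 < p) (hq : 0 < q) (hz : 0 < z) :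
    IntegrableOn (fun s => ψ2 ν p q r z s) (Ioi 0) := by
  have hb : (0:ℝ) < 1 / (4 * z) := by positivity
  have hmaj := (integrableOn_rpow_mul_exp_neg_mul_sq hb
      (by linarith : (-1:ℝ) < ν - 2)).const_mul
      ((2 * Real.sqrt π) ^ 2 * (z ^ (-(3:ℝ)/2) * Real.exp (-(r * z))))
  apply Integrable.mono' hmaj
  · have : Measurable (fun s => ψ2 ν p q r z s) := by unfold ψ2; fun_prop
    exact this.aestronglyMeasurable
  rw [ae_restrict_iff' measurableSet_Ioi]
  filter_upwards with s hs
  have hs' : (0:ℝ) < s := hs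
  have hW : (0:ℝ) ≤ z ^ (-(3:ℝ)/2) := Real.rpow_nonneg hz.le _
  have hP : (0:ℝ) ≤ s ^ (ν - 2) := Real.rpow_nonneg hs'.le _
  have hE1 : Real.exp (-(s * (Real.sqrt p + Real.sqrt q))) ≤ 1 := by
    rw [Real.exp_le_one_iff]
    have : (0:ℝ) ≤ s * (Real.sqrt p + Real.sqrt q) := by positivity
    linarith
  have hE2 : Real.exp (-(s ^ 2 / (4 * z))) ≤ Real.exp (-(1 / (4 * z)) * s ^ 2) := by
    rw [Real.exp_le_exp]
    have h2 : -(1 / (4 * z)) * s ^ 2 = -(s ^ 2 / (4 * z)) := by ring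
    linarith
  have key : ψ2 ν p q r z s
      = ((2 * Real.sqrt π) ^ 2 * (z ^ (-(3:ℝ)/2) * Real.exp (-(r * z))) * s ^ (ν - 2))
        * (Real.exp (-(s * (Real.sqrt p + Real.sqrt q))) * Real.exp (-(s ^ 2 / (4 * z)))) := by
    unfold ψ2; ring
  have hcoef : (0:ℝ) ≤ (2 * Real.sqrt π) ^ 2 * (z ^ (-(3:ℝ)/2) * Real.exp (-(r * z)))
      * s ^ (ν - 2) := by positivity
  have hnn : 0 ≤ ψ2 ν p q r z s := psi2_nonneg hz hs'
  rw [Real.norm_eq_abs, abs_of_nonneg hnn, key]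
  calc ((2 * Real.sqrt π) ^ 2 * (z ^ (-(3:ℝ)/2) * Real.exp (-(r * z))) * s ^ (ν - 2))
        * (Real.exp (-(s * (Real.sqrt p + Real.sqrt q))) * Real.exp (-(s ^ 2 / (4 * z))))
      ≤ ((2 * Real.sqrt π) ^ 2 * (z ^ (-(3:ℝ)/2) * Real.exp (-(r * z))) * s ^ (ν - 2))
        * (1 * Real.exp (-(1 / (4 * z)) * s ^ 2)) := by
        apply mul_le_mul_of_nonneg_left ?_ hcoef
        exact mul_le_mul hE1 hE2 (Real.exp_pos _).le zero_le_one
    _ = (2 * Real.sqrt π) ^ 2 * (z ^ (-(3:ℝ)/2) * Real.exp (-(r * z)))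
        * (s ^ (ν - 2) * Real.exp (-(1 / (4 * z)) * s ^ 2)) := by ring

lemma int_psi3 {ν p q r : ℝ} (hν : 2 < ν) (hp : 0 < p) (hq : 0 < q) (hr : 0 < r) :
    IntegrableOn (fun s => ψ3 ν p q r s) (Ioi 0) := by
  have hσ : (0:ℝ) < Real.sqrt p + Real.sqrt q + Real.sqrt r := by
    have := Real.sqrt_pos.2 hp
    have := Real.sqrt_pos.2 hq
    have := Real.sqrt_pos.2 hr
    linarith
  have h := (L0 (by linarith : (-1:ℝ) < ν - 3) hσ).const_mul ((2 * Real.sqrt π) ^ 3)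
  apply IntegrableOn.congr_fun h ?_ measurableSet_Ioi
  intro s hs
  unfold ψ3
  simp only
  rw [show Real.sqrt p + Real.sqrt q + Real.sqrt r = (Real.sqrt p + Real.sqrt q + Real.sqrt r)
    from rfl]
  rw [mul_comm (Real.sqrt p + Real.sqrt q + Real.sqrt r) s]
  ring

lemma stage1 {ν p q r y z : ℝ} (hν : 2 < ν) (hp : 0 < p) (hq : 0 < q) (hr : 0 < r)
    (hy : 0 < y) (hz : 0 < z) :
    ∫ x in Ioi (0:ℝ), (x * y * z) ^ ((ν - 2) / 2) / (x * y + x * z + y * z) ^ ((ν + 1) / 2) *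
        Real.exp (-p * x - q * y - r * z)
      = (2:ℝ) ^ (-ν) / Real.Gamma ((ν + 1) / 2) * ∫ s in Ioi (0:ℝ), ψ1 ν p q r y z s := by
  have hstep : ∀ x ∈ Ioi (0:ℝ),
      (x * y * z) ^ ((ν - 2) / 2) / (x * y + x * z + y * z) ^ ((ν + 1) / 2) *
        Real.exp (-p * x - q * y - r * z)
      = (2:ℝ) ^ (-ν) / Real.Gamma ((ν + 1) / 2) *
          ∫ s in Ioi (0:ℝ), (s ^ ν * Real.exp (-(s ^ 2 / (4 * x)) - s ^ 2 / (4 * y)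
              - s ^ 2 / (4 * z))) *
            ((x * y * z) ^ (-(3:ℝ)/2) * Real.exp (-p * x - q * y - r * z)) := by
    intro x hx
    have hA := stepA hν hx hy hz
    rw [hA, integral_mul_const]
    ring
  rw [setIntegral_congr_fun measurableSet_Ioi hstep, integral_const_mul]
  congr 1
  have hfac : ∀ s : ℝ, ∀ x ∈ Ioi (0:ℝ),
      (s ^ ν * ((y * z) ^ (-(3:ℝ)/2) * (Real.exp (-(s ^ 2 / (4 * y)) - s ^ 2 / (4 * z)) *
          Real.exp (-(q * y) - r * z)))) *
        (x ^ (-(3:ℝ)/2) * Real.exp (-(s ^ 2 / (4 * x)) - p * x))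
      = (s ^ ν * Real.exp (-(s ^ 2 / (4 * x)) - s ^ 2 / (4 * y) - s ^ 2 / (4 * z))) *
          ((x * y * z) ^ (-(3:ℝ)/2) * Real.exp (-p * x - q * y - r * z)) := by
    intro s x hx
    have hx' : (0:ℝ) < x := hx
    rw [show x * y * z = x * (y * z) by ring, Real.mul_rpow hx'.le (by positivity)]
    have hE : Real.exp (-(s ^ 2 / (4 * x)) - s ^ 2 / (4 * y) - s ^ 2 / (4 * z)) *
        Real.exp (-p * x - q * y - r * z)
        = (Real.exp (-(s ^ 2 / (4 * y)) - s ^ 2 / (4 * z)) * Real.exp (-(q * y) - r * z)) *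
            Real.exp (-(s ^ 2 / (4 * x)) - p * x) := by
      rw [← Real.exp_add, ← Real.exp_add, ← Real.exp_add]
      congr 1
      ring
    linear_combination (s ^ ν * ((y * z) ^ (-(3:ℝ)/2) * (x ^ (-(3:ℝ)/2)))) * hE.symm
  apply swap_eval
  · have : Measurable (fun w : ℝ × ℝ =>
        (w.2 ^ ν * Real.exp (-(w.2 ^ 2 / (4 * w.1)) - w.2 ^ 2 / (4 * y) - w.2 ^ 2 / (4 * z))) *
          ((w.1 * y * z) ^ (-(3:ℝ)/2) * Real.exp (-p * w.1 - q * y - r * z))) := by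
      fun_prop
    exact this
  · intro x hx s hs
    have hx' : (0:ℝ) < x := hx
    have hs' : (0:ℝ) < s := hs
    have h1 : (0:ℝ) ≤ s ^ ν := Real.rpow_nonneg hs'.le _
    have h2 : (0:ℝ) ≤ (x * y * z) ^ (-(3:ℝ)/2) := Real.rpow_nonneg (by positivity) _
    positivity
  · intro s hs
    apply IntegrableOn.congr_fun (((keyB'_int hp hs).const_mul
      (s ^ ν * ((y * z) ^ (-(3:ℝ)/2) * (Real.exp (-(s ^ 2 / (4 * y)) - s ^ 2 / (4 * z)) *
        Real.exp (-(q * y) - r * z)))))) ?_ measurableSet_Ioi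
    intro x hx
    simp only
    exact hfac s x hx
  · intro s hs
    have hs' : (0:ℝ) < s := hs
    have h1 : ∫ x in Ioi (0:ℝ),
        (s ^ ν * Real.exp (-(s ^ 2 / (4 * x)) - s ^ 2 / (4 * y) - s ^ 2 / (4 * z))) *
          ((x * y * z) ^ (-(3:ℝ)/2) * Real.exp (-p * x - q * y - r * z))
        = ∫ x in Ioi (0:ℝ), (s ^ ν * ((y * z) ^ (-(3:ℝ)/2) *
            (Real.exp (-(s ^ 2 / (4 * y)) - s ^ 2 / (4 * z)) * Real.exp (-(q * y) - r * z)))) *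
          (x ^ (-(3:ℝ)/2) * Real.exp (-(s ^ 2 / (4 * x)) - p * x)) := by
      apply setIntegral_congr_fun measurableSet_Ioi
      intro x hx
      exact (hfac s x hx).symm
    rw [h1, integral_const_mul, keyB' hp hs']
    unfold ψ1
    rw [show ν - 1 = ν - 1 from rfl, Real.rpow_sub hs', Real.rpow_one]
    field_simp
  · exact int_psi1 hν hp hy hz

lemma stage2 {ν p q r z : ℝ} (hν : 2 < ν) (hp : 0 < p) (hq : 0 < q) (hr : 0 < r)
    (hz : 0 < z) :
    ∫ y in Ioi (0:ℝ), ∫ s in Ioi (0:ℝ), ψ1 ν p q r y z s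
      = ∫ s in Ioi (0:ℝ), ψ2 ν p q r z s := by
  have hfac : ∀ s : ℝ, ∀ y ∈ Ioi (0:ℝ),
      (s ^ (ν - 1) * (2 * Real.sqrt π) * Real.exp (-(s * Real.sqrt p)) *
          (z ^ (-(3:ℝ)/2) * Real.exp (-(s ^ 2 / (4 * z))) * Real.exp (-(r * z)))) *
        (y ^ (-(3:ℝ)/2) * Real.exp (-(s ^ 2 / (4 * y)) - q * y))
      = ψ1 ν p q r y z s := by
    intro s y hy
    have hy' : (0:ℝ) < y := hy
    unfold ψ1
    rw [Real.mul_rpow hy'.le hz.le]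
    have hE : Real.exp (-(s ^ 2 / (4 * y)) - s ^ 2 / (4 * z)) * Real.exp (-(q * y) - r * z)
        = (Real.exp (-(s ^ 2 / (4 * z))) * Real.exp (-(r * z))) *
            Real.exp (-(s ^ 2 / (4 * y)) - q * y) := by
      rw [← Real.exp_add, ← Real.exp_add, ← Real.exp_add]
      congr 1
      ring
    linear_combination (s ^ (ν - 1) * (2 * Real.sqrt π) * Real.exp (-(s * Real.sqrt p)) *
      z ^ (-(3:ℝ)/2) * y ^ (-(3:ℝ)/2)) * hE.symm
  apply swap_eval
  · have : Measurable (fun w : ℝ × ℝ => ψ1 ν p q r w.1 z w.2) := by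
      unfold ψ1; fun_prop
    exact this
  · intro y hy s hs
    exact psi1_nonneg hy hz hs
  · intro s hs
    apply IntegrableOn.congr_fun (((keyB'_int hq hs).const_mul
      (s ^ (ν - 1) * (2 * Real.sqrt π) * Real.exp (-(s * Real.sqrt p)) *
        (z ^ (-(3:ℝ)/2) * Real.exp (-(s ^ 2 / (4 * z))) * Real.exp (-(r * z)))))) ?_
      measurableSet_Ioi
    intro y hy
    simp only
    exact hfac s y hy
  · intro s hs
    have hs' : (0:ℝ) < s := hs
    have h1 : ∫ y in Ioi (0:ℝ), ψ1 ν p q r y z s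
        = ∫ y in Ioi (0:ℝ), (s ^ (ν - 1) * (2 * Real.sqrt π) * Real.exp (-(s * Real.sqrt p)) *
            (z ^ (-(3:ℝ)/2) * Real.exp (-(s ^ 2 / (4 * z))) * Real.exp (-(r * z)))) *
          (y ^ (-(3:ℝ)/2) * Real.exp (-(s ^ 2 / (4 * y)) - q * y)) := by
      apply setIntegral_congr_fun measurableSet_Ioi
      intro y hy
      exact (hfac s y hy).symm
    rw [h1, integral_const_mul, keyB' hq hs']
    unfold ψ2
    have hEE : Real.exp (-(s * Real.sqrt p)) * Real.exp (-(s * Real.sqrt q))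
        = Real.exp (-(s * (Real.sqrt p + Real.sqrt q))) := by
      rw [← Real.exp_add]
      congr 1
      ring
    rw [show ν - 2 = ν - 1 - 1 by ring, Real.rpow_sub hs' (ν-1) 1, Real.rpow_one, ← hEE]
    field_simp
  · exact int_psi2 hν hp hq hz

lemma stage3 {ν p q r : ℝ} (hν : 2 < ν) (hp : 0 < p) (hq : 0 < q) (hr : 0 < r) :
    ∫ z in Ioi (0:ℝ), ∫ s in Ioi (0:ℝ), ψ2 ν p q r z s
      = ∫ s in Ioi (0:ℝ), ψ3 ν p q r s := by
  have hfac : ∀ s : ℝ, ∀ z ∈ Ioi (0:ℝ),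
      (s ^ (ν - 2) * (2 * Real.sqrt π) ^ 2 *
          Real.exp (-(s * (Real.sqrt p + Real.sqrt q)))) *
        (z ^ (-(3:ℝ)/2) * Real.exp (-(s ^ 2 / (4 * z)) - r * z))
      = ψ2 ν p q r z s := by
    intro s z hz
    unfold ψ2
    have hE : Real.exp (-(s ^ 2 / (4 * z))) * Real.exp (-(r * z))
        = Real.exp (-(s ^ 2 / (4 * z)) - r * z) := by
      rw [← Real.exp_add]
      ring_nf
    linear_combination (s ^ (ν - 2) * (2 * Real.sqrt π) ^ 2 *
      Real.exp (-(s * (Real.sqrt p + Real.sqrt q))) * z ^ (-(3:ℝ)/2)) * hE.symm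
  apply swap_eval
  · have : Measurable (fun w : ℝ × ℝ => ψ2 ν p q r w.1 w.2) := by
      unfold ψ2; fun_prop
    exact this
  · intro z hz s hs
    exact psi2_nonneg hz hs
  · intro s hs
    apply IntegrableOn.congr_fun (((keyB'_int hr hs).const_mul
      (s ^ (ν - 2) * (2 * Real.sqrt π) ^ 2 *
        Real.exp (-(s * (Real.sqrt p + Real.sqrt q)))))) ?_ measurableSet_Ioi
    intro z hz
    simp only
    exact hfac s z hz
  · intro s hs
    have hs' : (0:ℝ) < s := hs
    have h1 : ∫ z in Ioi (0:ℝ), ψ2 ν p q r z s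
        = ∫ z in Ioi (0:ℝ), (s ^ (ν - 2) * (2 * Real.sqrt π) ^ 2 *
            Real.exp (-(s * (Real.sqrt p + Real.sqrt q)))) *
          (z ^ (-(3:ℝ)/2) * Real.exp (-(s ^ 2 / (4 * z)) - r * z)) := by
      apply setIntegral_congr_fun measurableSet_Ioi
      intro z hz
      exact (hfac s z hz).symm
    rw [h1, integral_const_mul, keyB' hr hs']
    unfold ψ3
    have hEE : Real.exp (-(s * (Real.sqrt p + Real.sqrt q))) * Real.exp (-(s * Real.sqrt r))
        = Real.exp (-(s * (Real.sqrt p + Real.sqrt q + Real.sqrt r))) := by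
      rw [← Real.exp_add]
      congr 1
      ring
    rw [show ν - 3 = ν - 2 - 1 by ring, Real.rpow_sub hs' (ν-2) 1, Real.rpow_one, ← hEE]
    field_simp
  · exact int_psi3 hν hp hq hr

lemma stage4 {ν p q r : ℝ} (hν : 2 < ν) (hp : 0 < p) (hq : 0 < q) (hr : 0 < r) :
    ∫ s in Ioi (0:ℝ), ψ3 ν p q r s
      = (2 * Real.sqrt π) ^ 3 *
          ((1 / (Real.sqrt p + Real.sqrt q + Real.sqrt r)) ^ (ν - 2) * Real.Gamma (ν - 2)) := by
  have hσ : (0:ℝ) < Real.sqrt p + Real.sqrt q + Real.sqrt r := by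
    have h1 := Real.sqrt_pos.2 hp
    have h2 := Real.sqrt_pos.2 hq
    have h3 := Real.sqrt_pos.2 hr
    linarith
  have h := Real.integral_rpow_mul_exp_neg_mul_Ioi (show (0:ℝ) < ν - 2 by linarith) hσ
  have hcongr : ∫ s in Ioi (0:ℝ), ψ3 ν p q r s
      = ∫ s in Ioi (0:ℝ), (2 * Real.sqrt π) ^ 3 * (s ^ (ν - 2 - 1) *
          Real.exp (-((Real.sqrt p + Real.sqrt q + Real.sqrt r) * s))) := by
    apply setIntegral_congr_fun measurableSet_Ioi
    intro s hs
    unfold ψ3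
    dsimp only
    rw [show ν - 2 - 1 = ν - 3 by ring,
      mul_comm s (Real.sqrt p + Real.sqrt q + Real.sqrt r)]
    ring
  rw [hcongr, integral_const_mul, h]

end TripleLaplaceAux

open TripleLaplaceAux in
/-- A three-dimensional Laplace transform (Prudnikov, Vol. 4, 3.2.3.2). -/
theorem triple_laplace_example (ν p q r : ℝ) (hν : 2 < ν)
    (hp : 0 < p) (hq : 0 < q) (hr : 0 < r) :
    ∫ z : ℝ in Ioi 0, ∫ y : ℝ in Ioi 0, ∫ x : ℝ in Ioi 0,
        (x * y * z) ^ ((ν - 2) / 2) / (x * y + x * z + y * z) ^ ((ν + 1) / 2) *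
          Real.exp (-p * x - q * y - r * z)
      = 8 * Real.pi * Real.Gamma (ν / 2 + 1) / (ν * (ν - 1) * (ν - 2)) *
        (Real.sqrt p + Real.sqrt q + Real.sqrt r) ^ (2 - ν) := by
  have hσ : (0:ℝ) < Real.sqrt p + Real.sqrt q + Real.sqrt r := by
    have h1 := Real.sqrt_pos.2 hp
    have h2 := Real.sqrt_pos.2 hq
    have h3 := Real.sqrt_pos.2 hr
    linarith
  have houter : ∀ z ∈ Ioi (0:ℝ),
      (∫ y : ℝ in Ioi 0, ∫ x : ℝ in Ioi 0,
        (x * y * z) ^ ((ν - 2) / 2) / (x * y + x * z + y * z) ^ ((ν + 1) / 2) *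
          Real.exp (-p * x - q * y - r * z))
      = (2:ℝ) ^ (-ν) / Real.Gamma ((ν + 1) / 2) * ∫ s in Ioi (0:ℝ), ψ2 ν p q r z s := by
    intro z hz
    have hz' : (0:ℝ) < z := hz
    have hinner : ∀ y ∈ Ioi (0:ℝ),
        (∫ x : ℝ in Ioi 0,
          (x * y * z) ^ ((ν - 2) / 2) / (x * y + x * z + y * z) ^ ((ν + 1) / 2) *
            Real.exp (-p * x - q * y - r * z))
        = (2:ℝ) ^ (-ν) / Real.Gamma ((ν + 1) / 2) * ∫ s in Ioi (0:ℝ), ψ1 ν p q r y z s :=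
      fun y hy => stage1 hν hp hq hr hy hz'
    rw [setIntegral_congr_fun measurableSet_Ioi hinner, integral_const_mul,
      stage2 hν hp hq hr hz']
  rw [setIntegral_congr_fun measurableSet_Ioi houter, integral_const_mul,
    stage3 hν hp hq hr, stage4 hν hp hq hr]
  -- constants
  have hσexp : (1 / (Real.sqrt p + Real.sqrt q + Real.sqrt r)) ^ (ν - 2)
      = (Real.sqrt p + Real.sqrt q + Real.sqrt r) ^ (2 - ν) := by
    rw [one_div, Real.inv_rpow hσ.le, ← Real.rpow_neg hσ.le, show -(ν-2) = 2-ν by ring]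
  have hΓk : (0:ℝ) < Real.Gamma (ν/2 + 1/2) := Real.Gamma_pos_of_pos (by linarith)
  have hkk : ((ν+1)/2 : ℝ) = ν/2 + 1/2 := by ring
  rw [hσexp, hkk]
  have hA := Real.Gamma_add_one (show (ν-2:ℝ) ≠ 0 from ne_of_gt (by linarith))
  rw [show ν - 2 + 1 = ν - 1 by ring] at hA
  have hB := Real.Gamma_add_one (show (ν-1:ℝ) ≠ 0 from ne_of_gt (by linarith))
  rw [show ν - 1 + 1 = ν by ring] at hB
  have hG1 := Real.Gamma_add_one (show (ν/2:ℝ) ≠ 0 from ne_of_gt (by linarith))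
  have hdup := Real.Gamma_mul_Gamma_add_half (ν/2)
  rw [show 2*(ν/2) = ν by ring] at hdup
  rw [hB, hA] at hdup
  have h2ν : (2:ℝ)^((1:ℝ)-ν) = 2*2^(-ν) := by
    rw [show (1:ℝ)-ν = 1 + -ν by ring, Real.rpow_add two_pos, Real.rpow_one]
  rw [h2ν] at hdup
  have hcube : (2*Real.sqrt π)^3 = 8*(π*Real.sqrt π) := by
    have h2 : Real.sqrt π ^ 2 = π := Real.sq_sqrt Real.pi_pos.le
    linear_combination (8*Real.sqrt π) * h2
  rw [hcube, hG1]
  have hGhalf : Real.Gamma (ν/2) = (ν-1)*((ν-2)*Real.Gamma (ν-2)) * (2*2^(-ν)) * Real.sqrt π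
      / Real.Gamma (ν/2+1/2) := by
    rw [eq_div_iff (ne_of_gt hΓk)]
    linear_combination hdup
  rw [hGhalf]
  have hν0 : (ν:ℝ) ≠ 0 := ne_of_gt (by linarith)
  have hν1 : (ν-1:ℝ) ≠ 0 := ne_of_gt (by linarith)
  have hν2 : (ν-2:ℝ) ≠ 0 := ne_of_gt (by linarith)
  field_simp
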